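/- Let p be an odd prime, n a positive integer, and σ_ω a cyclic supercharacter modulo pn, where ω is a unit modulo pn with reductions ω_p modulo p and ω_n modulo n. Suppose ord(ω_n) = uv with gcd(v, ord(ω_p)) = 1, that u is even and v is odd, that ω_n^{uv/2} = −1 in ℤ/nℤ, and that ord(ω_p) = (p − 1)/r for a positive integer r. Let t be an integer coprime to p and s any integer. If p ≡ 1 (mod 2ru), then σ_ω(sp + tn) = (2/(ru))·Σ_{j=1}^{u/2} [ (g_{ru/2}(ω^j t) − 1)·Re(σ_{ω_n^u}(ω^j s)) + i·(g_{ru}(ω^j t) − g_{ru/2}(ω^j t))·Im(σ_{ω_n^u}(ω^j s)) ], where the arguments ω^j t of the Gauss sums are taken modulo p and σ_{ω_n^u} is the cyclic supercharacter modulo n attached to ω_n^u. -/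

import Mathlib

open Finset Pointwise

/-- `e(θ) = exp(2πiθ)`. -/
noncomputable def e2 (θ : ℝ) : ℂ := Complex.exp (2 * Real.pi * Complex.I * θ)

/-- The cyclic supercharacter `σ_ω : ℤ/nℤ → ℂ` attached to a unit `ω` mod `n`:
`σ_ω(y) = ∑_{j=1}^{d} e(ω^j y / n)` where `d` is the multiplicative order of `ω`. -/
noncomputable def cyclicSuperchar (n : ℕ) (ω : (ZMod n)ˣ) (y : ZMod n) : ℂ :=
  ∑ j ∈ Finset.Icc 1 (orderOf ω),
    e2 (((((ω ^ j : (ZMod n)ˣ) : ZMod n) * y).val : ℝ) / (n : ℝ))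

/-- `H m`: the set of traces of matrices in `SU_m(ℂ)` (the filled `m`-cusped hypocycloid). -/
noncomputable def H (m : ℕ) : Set ℂ :=
  Set.range fun M : Matrix.specialUnitaryGroup (Fin m) ℂ =>
    Matrix.trace (M : Matrix (Fin m) (Fin m) ℂ)

/-- `P m`: the convex hull of `H m` (the filled regular `m`-gon). -/
noncomputable def Pset (m : ℕ) : Set ℂ := convexHull ℝ (H m)

/-- `c_{j,k}` : the coefficient of `x^j` in the remainder of `x^k` mod `Φ_d(x)`. -/
noncomputable def cExp (d j k : ℕ) : ℤ :=
  (((Polynomial.X : Polynomial ℤ) ^ k) %ₘ Polynomial.cyclotomic d ℤ).coeff j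

/-- The Laurent-polynomial map `g_d(z_1,…,z_{φ(d)}) = ∑_{k=1}^d ∏_j z_j^{c_{j,k}}`. -/
noncomputable def gphi (d : ℕ) (z : Fin (Nat.totient d) → ℂ) : ℂ :=
  ∑ k ∈ Finset.Icc 1 d, ∏ j : Fin (Nat.totient d), z j ^ (cExp d (j : ℕ) k)

/-- The image of `g_d` restricted to the torus `𝕋^{φ(d)}`. -/
noncomputable def gImage (d : ℕ) : Set ℂ :=
  {w : ℂ | ∃ z : Fin (Nat.totient d) → ℂ, (∀ j, ‖z j‖ = 1) ∧ gphi d z = w}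

/-- The `k`-fold Minkowski sum `A^{⊕k}` of a subset of `ℂ` with itself. -/
def minkSumPow (A : Set ℂ) (k : ℕ) : Set ℂ :=
  {z : ℂ | ∃ f : Fin k → ℂ, (∀ i, f i ∈ A) ∧ ∑ i, f i = z}

/-- Scaling a subset of `ℂ` by a real number. -/
def scale (r : ℝ) (A : Set ℂ) : Set ℂ := (fun z => (r : ℂ) * z) '' A

/-- The sets `A k` fill out `B` as `k → ∞`. -/
def FillsOut (A : ℕ → Set ℂ) (B : Set ℂ) : Prop :=
  (∀ k, A k ⊆ B) ∧
    ∀ U : Set ℂ, IsOpen U → U.Nonempty → U ⊆ B → ∃ K : ℕ, ∀ k > K, (U ∩ A k).Nonempty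

/-- A subset of `ℂ` has `k`-fold dihedral symmetry if it is stable under complex
conjugation and under rotation by `2π/k` about the origin. -/
def HasDihedralSymm (k : ℕ) (A : Set ℂ) : Prop :=
  (∀ z ∈ A, (starRingEnd ℂ) z ∈ A) ∧ ∀ z ∈ A, e2 (1 / k) * z ∈ A

/-- The `k`-fold dihedral closure of a subset of `ℂ`. -/
def dihedralClosure (k : ℕ) (A : Set ℂ) : Set ℂ :=
  ⋂₀ {B : Set ℂ | A ⊆ B ∧ HasDihedralSymm k B}

/-- The Gauss sum `g_k(t) = ∑_{j=1}^{p} e(t j^k / p)` of order `k` mod `p`. -/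
noncomputable def gaussG (p k : ℕ) (t : ZMod p) : ℂ :=
  ∑ j ∈ Finset.Icc 1 p, e2 ((((t * (j : ZMod p) ^ k).val : ℕ) : ℝ) / (p : ℝ))

/-- The Gauss sum `G(t,χ) = ∑_{j=1}^{p-1} χ(j) e(tj/p)` attached to a character `χ` mod `p`. -/
noncomputable def GSum (p : ℕ) (χ : DirichletCharacter ℂ p) (t : ZMod p) : ℂ :=
  ∑ j ∈ Finset.Icc 1 (p - 1), χ (j : ZMod p) * e2 ((((t * (j : ZMod p)).val : ℕ) : ℝ) / (p : ℝ))


section Aux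
open Finset



noncomputable def E (m : ℕ) (z : ℤ) : ℂ := Complex.exp (2 * Real.pi * Complex.I * z / m)

lemma E_add (m : ℕ) (z w : ℤ) : E m (z + w) = E m z * E m w := by
  rw [E, E, E, ← Complex.exp_add]; push_cast; ring_nf

lemma E_mod (m : ℕ) [NeZero m] (z : ℤ) : E m (z % m) = E m z := by
  conv_rhs => rw [← Int.emod_add_mul_ediv z m]
  rw [E, E]
  have hm : (m : ℂ) ≠ 0 := by exact_mod_cast (NeZero.ne m)
  rw [show (((z % m + (m:ℤ) * (z / m)) : ℤ) : ℂ) = ((z % m : ℤ) : ℂ) + (m:ℂ) * ((z / m : ℤ):ℂ) by push_cast; ring]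
  rw [show (2 * Real.pi * Complex.I * (((z % m : ℤ):ℂ) + (m:ℂ) * ((z / m : ℤ):ℂ)) / m : ℂ)
      = 2 * Real.pi * Complex.I * (z % m : ℤ) / m + 2 * Real.pi * Complex.I * (z / m : ℤ) by
    push_cast; field_simp]
  rw [Complex.exp_add, show (2 * Real.pi * Complex.I * (z / m : ℤ) : ℂ) = (z / m : ℤ) * (2 * Real.pi * Complex.I) by ring,
    Complex.exp_int_mul_two_pi_mul_I, mul_one]

lemma E_conj (m : ℕ) (z : ℤ) : (starRingEnd ℂ) (E m z) = E m (-z) := by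
  rw [E, E, ← Complex.exp_conj]
  congr 1
  simp only [map_div₀, map_mul, Complex.conj_I, Complex.conj_ofReal, map_ofNat,
    map_intCast, map_natCast]
  push_cast
  ring

lemma e2_val (m : ℕ) [NeZero m] (z : ℤ) :
    e2 ((((z : ZMod m).val : ℕ) : ℝ) / (m : ℝ)) = E m z := by
  rw [e2, ← E_mod, E, ← ZMod.val_intCast z]
  push_cast
  ring_nf

lemma E_cancel (p n : ℕ) (hn : n ≠ 0) (z : ℤ) : E (p * n) (z * n) = E p z := by
  rw [E, E]
  congr 1
  have hn' : (n:ℂ) ≠ 0 := by exact_mod_cast hn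
  push_cast
  by_cases hp : (p:ℂ) = 0
  · simp [hp]
  · field_simp


lemma sum_range_mul {M : Type*} [AddCommMonoid M] (a b : ℕ) (f : ℕ → M) :
    ∑ i ∈ range (a * b), f i = ∑ x ∈ range a, ∑ y ∈ range b, f (x + a * y) := by
  rcases Nat.eq_zero_or_pos a with rfl | ha
  · simp
  rw [← Finset.sum_product']
  apply Finset.sum_nbij' (fun j => (j % a, j / a)) (fun x => x.1 + a * x.2)
  · intro j hj
    simp only [mem_range] at hj
    simp only [mem_product, mem_range]
    exact ⟨Nat.mod_lt _ ha, Nat.div_lt_of_lt_mul (by omega)⟩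
  · intro x hx
    simp only [mem_product, mem_range] at hx
    simp only [mem_range]
    calc x.1 + a * x.2 < a + a * x.2 := by omega
    _ = a * (x.2 + 1) := by ring
    _ ≤ a * b := Nat.mul_le_mul_left a hx.2
  · intro j hj; exact Nat.mod_add_div j a
  · intro x hx
    simp only [mem_product, mem_range] at hx
    have h1 : (x.1 + a * x.2) % a = x.1 := by
      rw [Nat.add_mul_mod_self_left, Nat.mod_eq_of_lt hx.1]
    have h2 : (x.1 + a * x.2) / a = x.2 := by
      rw [Nat.add_mul_div_left _ _ ha, Nat.div_eq_of_lt hx.1, zero_add]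
    simp [h1, h2]
  · intro j hj; simp [Nat.mod_add_div]

-- rotate lemma
lemma sum_range_pow_rotate {G : Type*} [Group G] (g : G) (w : ℕ) (hg : g ^ w = 1)
    (x : G) (F : G → ℂ) (k : ℕ) :
    ∑ m ∈ range w, F (g ^ m * (g ^ k * x)) = ∑ m ∈ range w, F (g ^ m * x) := by
  induction k with
  | zero => simp
  | succ k ih =>
    rw [← ih]
    rcases Nat.eq_zero_or_pos w with rfl | hw
    · simp
    have key : ∀ y : G, ∑ m ∈ range w, F (g ^ m * (g * y)) = ∑ m ∈ range w, F (g ^ m * y) := by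
      intro y
      have h1 : ∀ m, g ^ m * (g * y) = g ^ (m + 1) * y := by
        intro m; rw [pow_succ]; group
      simp only [h1]
      obtain ⟨w', rfl⟩ : ∃ w', w = w' + 1 := ⟨w - 1, by omega⟩
      rw [Finset.sum_range_succ, Finset.sum_range_succ' _ w']
      have : g ^ (w' + 1) = g ^ 0 := by rw [hg, pow_zero]
      rw [this]
    calc ∑ m ∈ range w, F (g ^ m * (g ^ (k+1) * x))
        = ∑ m ∈ range w, F (g ^ m * (g * (g ^ k * x))) := by
          congr 1; ext m; congr 2; rw [pow_succ]; group
      _ = ∑ m ∈ range w, F (g ^ m * (g ^ k * x)) := key _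


lemma sum_Icc_one_eq_sum_range {M : Type*} [AddCommGroup M] (f : ℕ → M) (d : ℕ)
    (h : f 0 = f d) : ∑ j ∈ Icc 1 d, f j = ∑ j ∈ range d, f j := by
  have h1 : ∑ j ∈ Icc 1 d, f j = ∑ i ∈ range d, f (1 + i) := by
    rw [← Finset.Ico_add_one_right_eq_Icc, Finset.sum_Ico_eq_sum_range]
    simp
  have h2 : (∑ i ∈ range d, f (i + 1)) + f 0 = ∑ i ∈ range d, f i + f d := by
    rw [← Finset.sum_range_succ' f d, Finset.sum_range_succ]
  rw [h1]
  have h3 : ∑ i ∈ range d, f (1 + i) = ∑ i ∈ range d, f (i + 1) := by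
    apply Finset.sum_congr rfl; intros; rw [Nat.add_comm]
  rw [h3]
  rw [h] at h2
  exact add_right_cancel h2

section Group
variable {G : Type*} [Group G] [Fintype G] [DecidableEq G]

lemma image_pow_eq_filter (h : G) (w : ℕ) (hw : orderOf h = w) (hw0 : 0 < w)
    (hcard : #(univ.filter fun x : G => x ^ w = 1) ≤ w) :
    (range w).image (h ^ ·) = univ.filter (fun x => x ^ w = 1) := by
  apply Finset.eq_of_subset_of_card_le
  · intro x hx
    simp only [mem_image, mem_range] at hx
    obtain ⟨m, hm, rfl⟩ := hx
    simp only [mem_filter, mem_univ, true_and]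
    rw [← pow_mul, mul_comm, pow_mul, ← hw, pow_orderOf_eq_one, one_pow]
  · calc #(univ.filter fun x : G => x ^ w = 1) ≤ w := hcard
      _ = #(range w) := by rw [card_range]
      _ = #((range w).image (h ^ ·)) := by
          rw [Finset.card_image_of_injOn]
          intro a ha b hb hab
          simp only [mem_coe, mem_range] at ha hb
          have := pow_inj_mod.mp hab
          rwa [hw, Nat.mod_eq_of_lt ha, Nat.mod_eq_of_lt hb] at this

lemma sum_pow_eq_filter (h : G) (w : ℕ) (hw : orderOf h = w) (hw0 : 0 < w)
    (hcard : #(univ.filter fun x : G => x ^ w = 1) ≤ w) (f : G → ℂ) :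
    ∑ m ∈ range w, f (h ^ m) = ∑ x ∈ univ.filter (fun x : G => x ^ w = 1), f x := by
  rw [← image_pow_eq_filter h w hw hw0 hcard, Finset.sum_image]
  intro a ha b hb hab
  simp only [mem_coe, mem_range] at ha hb
  have := pow_inj_mod.mp hab
  rwa [hw, Nat.mod_eq_of_lt ha, Nat.mod_eq_of_lt hb] at this

end Group

section AnyGroup
variable {G : Type*} [Group G] [DecidableEq G]

/-- coprime-power reindex -/
lemma sum_pow_coprime (h : G) (v : ℕ) (hv : orderOf h = v) (hv0 : 0 < v)
    (c : ℕ) (hc : Nat.Coprime c v) (f : G → ℂ) :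
    ∑ b ∈ range v, f (h ^ (c * b)) = ∑ b ∈ range v, f (h ^ b) := by
  have hinj : ∀ a ∈ range v, ∀ b ∈ range v, h ^ a = h ^ b → a = b := by
    intro a ha b hb hab
    simp only [mem_range] at ha hb
    have := pow_inj_mod.mp hab
    rwa [hv, Nat.mod_eq_of_lt ha, Nat.mod_eq_of_lt hb] at this
  have hinj2 : ∀ a ∈ range v, ∀ b ∈ range v, h ^ (c * a) = h ^ (c * b) → a = b := by
    intro a ha b hb hab
    simp only [mem_range] at ha hb
    have := pow_inj_mod.mp hab
    rw [hv] at this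
    have h2 : (c * a) % v = (c * b) % v := this
    have : a % v = b % v := by
      have := (Nat.ModEq.cancel_left_of_coprime (by rwa [Nat.coprime_comm] at hc) h2)
      exact this
    rwa [Nat.mod_eq_of_lt ha, Nat.mod_eq_of_lt hb] at this
  have himg : (range v).image (fun b => h ^ (c * b)) = (range v).image (h ^ ·) := by
    apply Finset.eq_of_subset_of_card_le
    · intro x hx
      simp only [mem_image, mem_range] at hx ⊢
      obtain ⟨b, hb, rfl⟩ := hx
      refine ⟨(c * b) % v, Nat.mod_lt _ hv0, ?_⟩
      rw [pow_inj_mod, hv, Nat.mod_mod_of_dvd _ dvd_rfl]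
    · rw [Finset.card_image_of_injOn fun a ha b hb => hinj a ha b hb,
        Finset.card_image_of_injOn fun a ha b hb => hinj2 a ha b hb]
  calc ∑ b ∈ range v, f (h ^ (c * b))
      = ∑ x ∈ (range v).image (fun b => h ^ (c * b)), f x := (Finset.sum_image hinj2).symm
    _ = ∑ x ∈ (range v).image (h ^ ·), f x := by rw [himg]
    _ = ∑ b ∈ range v, f (h ^ b) := Finset.sum_image hinj

end AnyGroup


section Cyclic
variable {G : Type*} [CommGroup G] [Fintype G] [DecidableEq G] [IsCyclic G]

lemma sum_pow_eq_card_smul (k : ℕ) (hk : 0 < k) (hkd : k ∣ Fintype.card G)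
    (hcard : ∀ w : ℕ, 0 < w → #(univ.filter fun x : G => x ^ w = 1) ≤ w)
    (f : G → ℂ) :
    ∑ x : G, f (x ^ k) =
      (k : ℂ) * ∑ y ∈ univ.filter (fun y : G => y ^ (Fintype.card G / k) = 1), f y := by
  obtain ⟨g, hg⟩ := IsCyclic.exists_generator (α := G)
  have hN : orderOf g = Fintype.card G := by
    rw [orderOf_eq_card_of_forall_mem_zpowers hg, Nat.card_eq_fintype_card]
  set N := Fintype.card G with hNdef
  set w := N / k with hwdef
  have hNkw : N = w * k := by rw [hwdef, Nat.div_mul_cancel hkd]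
  have hw0 : 0 < w := Nat.div_pos (Nat.le_of_dvd Fintype.card_pos hkd) hk
  have hinj : ∀ a ∈ range N, ∀ b ∈ range N, g ^ a = g ^ b → a = b := by
    intro a ha b hb hab
    simp only [mem_range] at ha hb
    have := pow_inj_mod.mp hab
    rwa [hN, Nat.mod_eq_of_lt ha, Nat.mod_eq_of_lt hb] at this
  have h1 : ∑ x : G, f (x ^ k) = ∑ i ∈ range N, f ((g ^ i) ^ k) := by
    have himg : (range N).image (fun i => g ^ i) = univ := by
      have := IsCyclic.image_range_card hg
      rwa [Nat.card_eq_fintype_card] at this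
    rw [← himg, Finset.sum_image (fun a ha b hb hab => hinj a ha b hb hab)]
  rw [h1]
  have h2 : ∀ x y : ℕ, ((g ^ (x + w * y)) ^ k) = (g ^ k) ^ x := by
    intro x y
    have hone : g ^ (w * y * k) = 1 := by
      have hh : w * y * k = N * y := by rw [hNkw]; ring
      rw [hh, pow_mul, ← hN, pow_orderOf_eq_one, one_pow]
    calc (g ^ (x + w * y)) ^ k = g ^ (x * k) * g ^ (w * y * k) := by
          rw [← pow_mul, add_mul, pow_add]
      _ = g ^ (x * k) := by rw [hone, mul_one]
      _ = (g ^ k) ^ x := by rw [← pow_mul, mul_comm]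
  have hordgk : orderOf (g ^ k) = w := by
    rw [orderOf_pow' g hk.ne', hN, hwdef]
    congr 1
    exact Nat.gcd_eq_right hkd
  calc ∑ i ∈ range N, f ((g ^ i) ^ k)
      = ∑ x ∈ range w, ∑ y ∈ range k, f ((g ^ (x + w * y)) ^ k) := by
        rw [← sum_range_mul w k (fun i => f ((g ^ i) ^ k)), ← hNkw]
    _ = ∑ x ∈ range w, ∑ _y ∈ range k, f ((g ^ k) ^ x) := by
        apply Finset.sum_congr rfl; intros x _; apply Finset.sum_congr rfl; intros y _
        rw [h2]
    _ = (k : ℂ) * ∑ x ∈ range w, f ((g ^ k) ^ x) := by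
        rw [Finset.mul_sum]; apply Finset.sum_congr rfl; intros
        rw [Finset.sum_const, card_range, nsmul_eq_mul]
    _ = (k : ℂ) * ∑ y ∈ univ.filter (fun y : G => y ^ w = 1), f y := by
        rw [sum_pow_eq_filter (g ^ k) w hordgk hw0 (hcard w hw0)]

end Cyclic

lemma card_filter_pow_le (p : ℕ) [Fact p.Prime] (w : ℕ) (hw : 0 < w) :
    #(univ.filter fun x : (ZMod p)ˣ => x ^ w = 1) ≤ w := by
  have h := card_nthRoots_subgroup_units (Units.coeHom (ZMod p))
    (fun a b hab => Units.ext hab) hw (1 : (ZMod p)ˣ)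
  calc #(univ.filter fun x : (ZMod p)ˣ => x ^ w = 1)
      ≤ Multiset.card (Polynomial.nthRoots w ((Units.coeHom (ZMod p)) 1)) := h
    _ ≤ w := Polynomial.card_nthRoots w _






lemma sum_Icc_one_cast (p : ℕ) [NeZero p] (F : ZMod p → ℂ) :
    ∑ j ∈ Icc 1 p, F (j : ZMod p) = ∑ x : ZMod p, F x := by
  have hp : 0 < p := Nat.pos_of_ne_zero (NeZero.ne p)
  apply Finset.sum_nbij' (i := fun j => ((j : ℕ) : ZMod p))
    (j := fun x : ZMod p => if x = 0 then p else x.val)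
  · intro j _; exact mem_univ _
  · intro x _
    simp only [mem_Icc]
    by_cases hx : x = 0
    · simp [hx]
      omega
    · have h1 : x.val ≠ 0 := fun h => hx (by rwa [← ZMod.val_eq_zero])
      have h2 : x.val < p := ZMod.val_lt x
      simp [hx]
      omega
  · intro j hj
    simp only [mem_Icc] at hj
    obtain ⟨hj1, hj2⟩ := hj
    by_cases h : ((j : ℕ) : ZMod p) = 0
    · obtain ⟨c, rfl⟩ := (ZMod.natCast_eq_zero_iff j p).mp h
      have hc : c = 1 := by
        have hc0 : 0 < c := Nat.pos_of_ne_zero (fun hc => by simp [hc] at hj1)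
        nlinarith
      subst hc
      simp [h]
    · rw [if_neg h, ZMod.val_natCast]
      have hjp : j < p := by
        rcases Nat.lt_or_ge j p with h' | h'
        · exact h'
        · exfalso
          have : j = p := le_antisymm hj2 h'
          subst this
          simp [ZMod.natCast_self] at h
      rw [Nat.mod_eq_of_lt hjp]
  · intro x _
    by_cases hx : x = 0
    · simp [hx, ZMod.natCast_self]
    · simp [hx, ZMod.natCast_val, ZMod.cast_id]
  · intro j _; rfl

lemma sum_zmod_split (p : ℕ) [Fact p.Prime] (F : ZMod p → ℂ) :
    ∑ x : ZMod p, F x = F 0 + ∑ u : (ZMod p)ˣ, F (u : ZMod p) := by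
  rw [← Finset.add_sum_erase _ F (mem_univ (0 : ZMod p))]
  congr 1
  apply Finset.sum_nbij' (i := fun x : ZMod p => if h : x = 0 then 1 else Units.mk0 x h)
    (j := fun u : (ZMod p)ˣ => (u : ZMod p))
  · intro x _; exact mem_univ _
  · intro u _
    simp only [mem_erase, mem_univ, and_true]
    exact Units.ne_zero u
  · intro x hx
    simp only [mem_erase, mem_univ, and_true] at hx
    simp [hx]
  · intro u _
    simp [Units.ne_zero u]
  · intro x hx
    simp only [mem_erase, mem_univ, and_true] at hx
    simp [hx]

lemma gaussG_eval (p : ℕ) [Fact p.Prime] (k : ℕ) (hk : 0 < k) (τ : ZMod p) :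
    gaussG p k τ = 1 + ∑ u : (ZMod p)ˣ,
      e2 ((((τ * ((u ^ k : (ZMod p)ˣ) : ZMod p)).val : ℕ) : ℝ) / (p : ℝ)) := by
  rw [gaussG, sum_Icc_one_cast p (fun x => e2 ((((τ * x ^ k).val : ℕ) : ℝ) / (p : ℝ))),
    sum_zmod_split p]
  have h0 : e2 ((((τ * (0:ZMod p) ^ k).val : ℕ) : ℝ) / (p : ℝ)) = 1 := by
    rw [zero_pow hk.ne', mul_zero]
    simp [e2, ZMod.val_zero]
  rw [h0]
  congr 1

end Aux


section CS
open Finset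

lemma cs_eq_range (n : ℕ) (χ : (ZMod n)ˣ) (y : ZMod n) :
    cyclicSuperchar n χ y = ∑ j ∈ range (orderOf χ),
      e2 (((((χ ^ j : (ZMod n)ˣ) : ZMod n) * y).val : ℝ) / (n : ℝ)) := by
  apply sum_Icc_one_eq_sum_range
  simp [pow_orderOf_eq_one]

lemma cs_pow_mul (n : ℕ) (χ : (ZMod n)ˣ) (a : ℕ) (y : ZMod n) :
    cyclicSuperchar n χ (((χ ^ a : (ZMod n)ˣ) : ZMod n) * y) = cyclicSuperchar n χ y := by
  rw [cs_eq_range, cs_eq_range]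
  have key := sum_range_pow_rotate χ (orderOf χ) (pow_orderOf_eq_one χ) 1
    (fun x => e2 ((((x : ZMod n) * y).val : ℝ) / (n : ℝ))) a
  simp only [mul_one] at key
  calc ∑ j ∈ range (orderOf χ), e2 (((((χ ^ j : (ZMod n)ˣ) : ZMod n) * (((χ ^ a : (ZMod n)ˣ) : ZMod n) * y)).val : ℝ) / (n : ℝ))
      = ∑ j ∈ range (orderOf χ), e2 (((((χ ^ j * χ ^ a : (ZMod n)ˣ) : ZMod n) * y).val : ℝ) / (n : ℝ)) := by
        apply Finset.sum_congr rfl; intro j _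
        rw [Units.val_mul, mul_assoc]
    _ = ∑ j ∈ range (orderOf χ), e2 (((((χ ^ j : (ZMod n)ˣ) : ZMod n) * y).val : ℝ) / (n : ℝ)) := key

lemma cs_neg (n : ℕ) [NeZero n] (χ : (ZMod n)ˣ) (y : ZMod n) :
    cyclicSuperchar n χ (-y) = (starRingEnd ℂ) (cyclicSuperchar n χ y) := by
  rw [cs_eq_range, cs_eq_range, map_sum]
  apply Finset.sum_congr rfl
  intro j _
  set z : ZMod n := ((χ ^ j : (ZMod n)ˣ) : ZMod n) * y with hz
  have h1 : ((χ ^ j : (ZMod n)ˣ) : ZMod n) * (-y) = -z := by rw [hz]; ring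
  rw [h1]
  have hzc : z = (((z.val : ℤ) : ZMod n)) := by push_cast; rw [ZMod.natCast_val, ZMod.cast_id]
  have hneg : -z = (((-(z.val : ℤ) : ℤ) : ZMod n)) := by rw [Int.cast_neg, ← hzc]
  have h2 := e2_val n (z.val : ℤ)
  rw [← hzc] at h2
  have h3 := e2_val n (-(z.val : ℤ))
  rw [← hneg] at h3
  rw [h3, h2, E_conj]

end CS


section TermSplit
open Finset

lemma term_split (p n : ℕ) (hp : 0 < p) (hn : 0 < n) (x : (ZMod (p*n))ˣ) (s t : ℤ) :
    e2 ((((x : ZMod (p*n)) * ((s * p + t * n : ℤ) : ZMod (p*n))).val : ℝ) / ((p*n : ℕ) : ℝ)) =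
      e2 (((((ZMod.unitsMap (dvd_mul_right p n) x : (ZMod p)ˣ) : ZMod p) * (t : ZMod p)).val : ℝ) / (p : ℝ)) *
      e2 (((((ZMod.unitsMap (dvd_mul_left n p) x : (ZMod n)ˣ) : ZMod n) * (s : ZMod n)).val : ℝ) / (n : ℝ)) := by
  haveI : NeZero (p * n) := ⟨Nat.mul_ne_zero hp.ne' hn.ne'⟩
  haveI : NeZero p := ⟨hp.ne'⟩
  haveI : NeZero n := ⟨hn.ne'⟩
  set W : ℤ := ((x : ZMod (p*n)).val : ℤ) with hWdef
  have hW : ((W : ℤ) : ZMod (p*n)) = (x : ZMod (p*n)) := by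
    rw [hWdef]; push_cast; rw [ZMod.natCast_val, ZMod.cast_id]
  have h1 : (x : ZMod (p*n)) * ((s * p + t * n : ℤ) : ZMod (p*n))
      = ((W * (s * p + t * n) : ℤ) : ZMod (p*n)) := by
    rw [← hW]; push_cast; ring
  rw [h1, e2_val]
  have h2 : W * (s * (p:ℤ) + t * n) = (W * s) * p + (W * t) * n := by ring
  rw [h2, E_add]
  have h3 : E (p * n) ((W * s) * p) = E n (W * s) := by
    rw [mul_comm p n]; exact E_cancel n p hp.ne' (W * s)
  have h4 : E (p * n) ((W * t) * n) = E p (W * t) := by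
    exact E_cancel p n hn.ne' (W * t)
  rw [h3, h4]
  have h5 : ((ZMod.unitsMap (dvd_mul_right p n) x : (ZMod p)ˣ) : ZMod p) * (t : ZMod p)
      = (((W * t : ℤ)) : ZMod p) := by
    rw [ZMod.unitsMap_def]
    simp only [Units.coe_map, MonoidHom.coe_coe]
    rw [← hW]
    push_cast
    rw [map_intCast]
  have h6 : ((ZMod.unitsMap (dvd_mul_left n p) x : (ZMod n)ˣ) : ZMod n) * (s : ZMod n)
      = (((W * s : ℤ)) : ZMod n) := by
    rw [ZMod.unitsMap_def]
    simp only [Units.coe_map, MonoidHom.coe_coe]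
    rw [← hW]
    push_cast
    rw [map_intCast]
  rw [h5, h6, e2_val, e2_val, mul_comm]

end TermSplit

set_option maxHeartbeats 2000000 in
/-- (Theorem `shapethm`(a).) With `σ_ω` a cyclic supercharacter mod `pn`,
`ord(ω_n) = uv`, `gcd(v, ord(ω_p)) = 1`, `u` even, `v` odd, `ω_n^{uv/2} = -1`,
`ord(ω_p) = (p-1)/r`, `t` coprime to `p`, and `p ≡ 1 (mod 2ru)`, one has
`σ_ω(sp+tn) = (2/ru)·∑_{j=1}^{u/2} [(g_{ru/2}(ω^j t) - 1)·Re σ_{ω_n^u}(ω^j s)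
  + i·(g_{ru}(ω^j t) - g_{ru/2}(ω^j t))·Im σ_{ω_n^u}(ω^j s)]`. -/
theorem stmt16 (p n : ℕ) (hp : p.Prime) (hpodd : Odd p) (hn : 0 < n)
    (ω : (ZMod (p * n))ˣ)
    (ωp : (ZMod p)ˣ) (hωp : ωp = ZMod.unitsMap (dvd_mul_right p n) ω)
    (ωn : (ZMod n)ˣ) (hωn : ωn = ZMod.unitsMap (dvd_mul_left n p) ω)
    (u v : ℕ) (hord : orderOf ωn = u * v) (hcop : Nat.Coprime v (orderOf ωp))
    (hu : Even u) (hv : Odd v)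
    (hneg : (ωn : ZMod n) ^ (u * v / 2) = -1)
    (r : ℕ) (hr : 0 < r) (hordp : orderOf ωp = (p - 1) / r)
    (t : ℤ) (ht : IsCoprime t (p : ℤ)) (s : ℤ)
    (hmod : p ≡ 1 [MOD 2 * r * u]) :
    cyclicSuperchar (p * n) ω ((s * p + t * n : ℤ) : ZMod (p * n)) =
      (2 / ((r : ℂ) * u)) * ∑ j ∈ Finset.Icc 1 (u / 2),
        ((gaussG p (r * u / 2) ((ωp : ZMod p) ^ j * (t : ZMod p)) - 1) *
            ((cyclicSuperchar n (ωn ^ u) ((ωn : ZMod n) ^ j * (s : ZMod n))).re : ℂ) +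
          Complex.I *
            (gaussG p (r * u) ((ωp : ZMod p) ^ j * (t : ZMod p)) -
              gaussG p (r * u / 2) ((ωp : ZMod p) ^ j * (t : ZMod p))) *
            ((cyclicSuperchar n (ωn ^ u) ((ωn : ZMod n) ^ j * (s : ZMod n))).im : ℂ)) := by
  classical
  haveI hfact : Fact p.Prime := ⟨hp⟩
  haveI : NeZero n := ⟨hn.ne'⟩
  haveI : NeZero p := ⟨hp.pos.ne'⟩
  haveI : NeZero (p * n) := ⟨Nat.mul_ne_zero hp.pos.ne' hn.ne'⟩
  have hp1 : 1 < p := hp.one_lt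
  -- basic arithmetic
  have hMdvd : 2 * r * u ∣ p - 1 := (Nat.modEq_iff_dvd' (by omega)).mp hmod.symm
  obtain ⟨m0, hm0⟩ := hMdvd
  have hordn_pos : 0 < orderOf ωn := orderOf_pos ωn
  have hupos : 0 < u := by rcases Nat.eq_zero_or_pos u with h | h; · rw [hord, h] at hordn_pos; omega
                           · exact h
  have hvpos : 0 < v := by rcases Nat.eq_zero_or_pos v with h | h; · rw [hord, h] at hordn_pos; omega
                           · exact h
  have hm0pos : 0 < m0 := by
    rcases Nat.eq_zero_or_pos m0 with h | h
    · rw [h, mul_zero] at hm0; omega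
    · exact h
  set u2 := u / 2 with hu2def
  obtain ⟨u2', hu2'⟩ := hu
  have huu2 : u = 2 * u2 := by omega
  have hu2pos : 0 < u2 := by omega
  set w := 2 * m0 with hwdef
  have hwpos : 0 < w := by omega
  have hdp : orderOf ωp = u * w := by
    rw [hordp, hm0, hwdef]
    rw [show 2 * r * u * m0 = r * (u * (2 * m0)) by ring]
    exact Nat.mul_div_cancel_left _ hr
  have hdppos : 0 < orderOf ωp := by rw [hdp]; positivity
  -- p and n are coprime
  have hpn : Nat.Coprime p n := by
    rcases (Nat.coprime_or_dvd_of_prime hp n) with h | h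
    · exact h
    · exfalso
      have hcomp : ωp = ZMod.unitsMap h ωn := by
        rw [hωp, hωn]
        have hc := ZMod.unitsMap_comp h (dvd_mul_left n p)
        calc ZMod.unitsMap (dvd_mul_right p n) ω
            = ZMod.unitsMap (dvd_trans h (dvd_mul_left n p)) ω := rfl
          _ = ((ZMod.unitsMap h).comp (ZMod.unitsMap (dvd_mul_left n p))) ω := by rw [hc]
          _ = ZMod.unitsMap h (ZMod.unitsMap (dvd_mul_left n p) ω) := rfl
      have hdvd : orderOf ωp ∣ u * v := by
        rw [← hord, hcomp]; exact orderOf_map_dvd _ _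
      have hdvd2 : orderOf ωp ∣ u := (Nat.Coprime.dvd_of_dvd_mul_right hcop.symm) hdvd
      have hle : orderOf ωp ≤ u := Nat.le_of_dvd hupos hdvd2
      rw [hdp] at hle
      have : u * 2 ≤ u * w := Nat.mul_le_mul_left u (by omega)
      omega
  -- injectivity of the pair of reductions
  have hinj1 : ∀ x : (ZMod (p*n))ˣ, ZMod.unitsMap (dvd_mul_right p n) x = 1 →
      ZMod.unitsMap (dvd_mul_left n p) x = 1 → x = 1 := by
    intro x h1 h2
    set c : ℤ := ((x : ZMod (p*n)).val : ℤ) with hcdef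
    have hc : ((c : ℤ) : ZMod (p*n)) = (x : ZMod (p*n)) := by
      rw [hcdef]; push_cast; rw [ZMod.natCast_val, ZMod.cast_id]
    have e1 : ((c : ℤ) : ZMod p) = 1 := by
      have := congrArg (Units.val) h1
      rw [ZMod.unitsMap_def] at this
      simp only [Units.coe_map, MonoidHom.coe_coe, Units.val_one] at this
      rw [← hc, map_intCast] at this
      exact this
    have e2' : ((c : ℤ) : ZMod n) = 1 := by
      have := congrArg (Units.val) h2
      rw [ZMod.unitsMap_def] at this
      simp only [Units.coe_map, MonoidHom.coe_coe, Units.val_one] at this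
      rw [← hc, map_intCast] at this
      exact this
    have d1 : (p : ℤ) ∣ c - 1 := by
      rwa [← ZMod.intCast_zmod_eq_zero_iff_dvd, Int.cast_sub, Int.cast_one, sub_eq_zero]
    have d2 : (n : ℤ) ∣ c - 1 := by
      rwa [← ZMod.intCast_zmod_eq_zero_iff_dvd, Int.cast_sub, Int.cast_one, sub_eq_zero]
    have dpn : ((p * n : ℕ) : ℤ) ∣ c - 1 := by
      push_cast
      exact (Nat.isCoprime_iff_coprime.mpr hpn).mul_dvd d1 d2
    have : ((c : ℤ) : ZMod (p * n)) = 1 := by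
      have := (ZMod.intCast_zmod_eq_zero_iff_dvd (c - 1) (p * n)).mpr dpn
      rw [Int.cast_sub, Int.cast_one, sub_eq_zero] at this
      exact this
    ext
    rw [← hc, this, Units.val_one]
  -- order of ω
  have hdofω : orderOf ω = orderOf ωp * v := by
    have hdvd_p : orderOf ωp ∣ orderOf ω := by rw [hωp]; exact orderOf_map_dvd _ ω
    have hdvd_n : u * v ∣ orderOf ω := by rw [← hord, hωn]; exact orderOf_map_dvd _ ω
    have hlcm_dvd : orderOf ω ∣ orderOf ωp * v := by
      apply orderOf_dvd_of_pow_eq_one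
      apply hinj1
      · rw [hωp] at *
        rw [map_pow, pow_mul, pow_orderOf_eq_one, one_pow]
      · rw [map_pow, ← hωn]
        rw [hdp, show u * w * v = u * v * w by ring, pow_mul, ← hord, pow_orderOf_eq_one, one_pow]
    have hmul_dvd : orderOf ωp * v ∣ orderOf ω :=
      Nat.Coprime.mul_dvd_of_dvd_of_dvd (Nat.Coprime.symm hcop) hdvd_p
        (dvd_trans ⟨u, mul_comm u v⟩ hdvd_n)
    exact Nat.dvd_antisymm hlcm_dvd hmul_dvd
  -- orders of powers
  have hordnu : orderOf (ωn ^ u) = v := by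
    rw [orderOf_pow' _ hupos.ne', hord, Nat.gcd_eq_right ⟨v, rfl⟩, Nat.mul_div_cancel_left _ hupos]
  have hordpu : orderOf (ωp ^ u) = w := by
    rw [orderOf_pow' _ hupos.ne', hdp, Nat.gcd_eq_right ⟨w, rfl⟩, Nat.mul_div_cancel_left _ hupos]
  have hordpu2 : orderOf (ωp ^ u2) = 2 * w := by
    rw [orderOf_pow' _ hu2pos.ne', hdp]
    have hgcd : Nat.gcd (u * w) u2 = u2 := Nat.gcd_eq_right ⟨2 * w, by rw [huu2]; ring⟩
    rw [hgcd, huu2, show 2 * u2 * w = u2 * (2 * w) by ring, Nat.mul_div_cancel_left _ hu2pos]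
  -- notation
  set tp : ZMod p := (t : ZMod p) with htp
  set sn : ZMod n := (s : ZMod n) with hsn
  set F : (ZMod p)ˣ → ℂ := fun x => e2 ((((x : ZMod p) * tp).val : ℝ) / (p : ℝ)) with hF
  set Fn : (ZMod n)ˣ → ℂ := fun z => e2 ((((z : ZMod n) * sn).val : ℝ) / (n : ℝ)) with hFn
  set S : ℕ → ℂ := fun a => cyclicSuperchar n (ωn ^ u) ((ωn : ZMod n) ^ a * sn) with hS
  set η : ℕ → ℂ := fun j => ∑ m ∈ Finset.range w, F (ωp ^ (j + u * m)) with hη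
  set filt : ℕ → Finset (ZMod p)ˣ :=
    fun k => Finset.univ.filter (fun x : (ZMod p)ˣ => x ^ k = 1) with hfilt
  have hcardfilt : ∀ k : ℕ, 0 < k → (filt k).card ≤ k := fun k hk => card_filter_pow_le p k hk
  have hSper : ∀ a : ℕ, S (a + u) = S a := by
    intro a
    simp only [hS]
    have harg : (ωn : ZMod n) ^ (a + u) * sn
        = (((ωn ^ u) ^ 1 : (ZMod n)ˣ) : ZMod n) * ((ωn : ZMod n) ^ a * sn) := by
      rw [pow_one, pow_add]
      push_cast
      ring
    rw [harg, cs_pow_mul]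
  have hηper : ∀ a : ℕ, η (a + u) = η a := by
    intro a
    simp only [hη]
    have hg : (ωp ^ u) ^ w = 1 := by rw [← hordpu]; exact pow_orderOf_eq_one _
    have key := sum_range_pow_rotate (ωp ^ u) w hg (ωp ^ a) F 1
    rw [pow_one] at key
    calc ∑ m ∈ Finset.range w, F (ωp ^ (a + u + u * m))
        = ∑ m ∈ Finset.range w, F ((ωp ^ u) ^ m * (ωp ^ u * ωp ^ a)) := by
          apply Finset.sum_congr rfl; intro m _
          congr 1
          rw [← pow_mul, ← pow_add, ← pow_add]
          congr 1
          ring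
      _ = ∑ m ∈ Finset.range w, F ((ωp ^ u) ^ m * ωp ^ a) := key
      _ = ∑ m ∈ Finset.range w, F (ωp ^ (a + u * m)) := by
          apply Finset.sum_congr rfl; intro m _
          congr 1
          rw [← pow_mul, ← pow_add]
          congr 1
          ring
  have hSperk : ∀ k a : ℕ, S (a + u * k) = S a := by
    intro k
    induction k with
    | zero => intro a; simp
    | succ k ih =>
      intro a
      rw [show a + u * (k + 1) = (a + u * k) + u by ring, hSper, ih]
  -- step L1–L4 : LHS = ∑_{j ∈ range u} η j * S j
  have hLHS : cyclicSuperchar (p * n) ω ((s * p + t * n : ℤ) : ZMod (p * n)) =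
      ∑ j ∈ Finset.range u, η j * S j := by
    rw [cs_eq_range]
    have hup : ∀ j : ℕ, ZMod.unitsMap (dvd_mul_right p n) (ω ^ j) = ωp ^ j := by
      intro j; rw [hωp, map_pow]
    have hun : ∀ j : ℕ, ZMod.unitsMap (dvd_mul_left n p) (ω ^ j) = ωn ^ j := by
      intro j; rw [hωn, map_pow]
    have hterm : ∀ j : ℕ,
        e2 (((((ω ^ j : (ZMod (p*n))ˣ) : ZMod (p*n)) *
          ((s * (p:ℤ) + t * (n:ℤ) : ℤ) : ZMod (p*n))).val : ℝ) / (((p*n : ℕ)) : ℝ))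
          = F (ωp ^ j) * Fn (ωn ^ j) := by
      intro j
      have h := term_split p n hp.pos hn (ω ^ j) s t
      rw [hup j, hun j] at h
      exact h
    rw [Finset.sum_congr rfl (fun j _ => hterm j)]
    rw [hdofω, hdp]
    rw [sum_range_mul (u * w) v (fun j => F (ωp ^ j) * Fn (ωn ^ j))]
    have hwv : Nat.Coprime w v := by
      have : w ∣ orderOf ωp := ⟨u, by rw [hdp]; ring⟩
      exact (Nat.Coprime.coprime_dvd_right this hcop).symm
    have hinner : ∀ a : ℕ, ∑ b ∈ Finset.range v, Fn (ωn ^ (a + (u * w) * b)) = S a := by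
      intro a
      have h1 : ∀ b : ℕ, Fn (ωn ^ (a + (u * w) * b))
          = (fun x => Fn (ωn ^ a * x)) ((ωn ^ u) ^ (w * b)) := by
        intro b
        simp only
        congr 1
        rw [← pow_mul, ← pow_add]
        congr 1
        ring
      rw [Finset.sum_congr rfl (fun b _ => h1 b)]
      rw [sum_pow_coprime (ωn ^ u) v hordnu hvpos w hwv (fun x => Fn (ωn ^ a * x))]
      simp only [hS]
      rw [cs_eq_range, hordnu]
      apply Finset.sum_congr rfl
      intro k _
      simp only [hFn]
      congr 2
      push_cast
      ring
    have hFper : ∀ x y : ℕ, F (ωp ^ (x + (u * w) * y)) = F (ωp ^ x) := by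
      intro x y
      congr 1
      rw [pow_add, pow_mul, ← hdp, pow_orderOf_eq_one, one_pow, mul_one]
    have hmid : ∀ x : ℕ, ∑ y ∈ Finset.range v, F (ωp ^ (x + (u * w) * y)) * Fn (ωn ^ (x + (u * w) * y))
        = F (ωp ^ x) * S x := by
      intro x
      rw [show ∑ y ∈ Finset.range v, F (ωp ^ (x + (u * w) * y)) * Fn (ωn ^ (x + (u * w) * y))
          = ∑ y ∈ Finset.range v, F (ωp ^ x) * Fn (ωn ^ (x + (u * w) * y)) from
        Finset.sum_congr rfl (fun y _ => by rw [hFper x y])]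
      rw [← Finset.mul_sum, hinner x]
    rw [Finset.sum_congr rfl (fun x _ => hmid x)]
    rw [sum_range_mul u w (fun x => F (ωp ^ x) * S x)]
    apply Finset.sum_congr rfl
    intro j _
    simp only [hη]
    rw [Finset.sum_mul]
    apply Finset.sum_congr rfl
    intro m _
    rw [hSperk m j]
  -- Gauss sum relations
  have hcardunits : Fintype.card (ZMod p)ˣ = p - 1 := ZMod.card_units_eq_totient p ▸ (by
    rw [Nat.totient_prime hp])
  have hfF : ∀ (j : ℕ) (y : (ZMod p)ˣ),
      e2 (((((ωp : ZMod p) ^ j * tp) * ((y : (ZMod p)ˣ) : ZMod p)).val : ℝ) / (p : ℝ))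
        = F (ωp ^ j * y) := by
    intro j y
    simp only [hF]
    congr 2
    push_cast
    ring
  have hfη : ∀ j : ℕ, ∑ y ∈ filt w,
      e2 (((((ωp : ZMod p) ^ j * tp) * ((y : (ZMod p)ˣ) : ZMod p)).val : ℝ) / (p : ℝ)) = η j := by
    intro j
    rw [Finset.sum_congr rfl (fun y _ => hfF j y)]
    simp only [hη, hfilt]
    rw [← sum_pow_eq_filter (ωp ^ u) w hordpu hwpos (hcardfilt w hwpos)
      (fun x => F (ωp ^ j * x))]
    apply Finset.sum_congr rfl
    intro m _
    congr 1
    rw [← pow_mul, ← pow_add]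
  have hgauss1 : ∀ j : ℕ, gaussG p (r * u) ((ωp : ZMod p) ^ j * tp) =
      1 + ((r : ℂ) * u) * η j := by
    intro j
    have hk : 0 < r * u := by positivity
    rw [gaussG_eval p (r * u) hk ((ωp : ZMod p) ^ j * tp)]
    have hdvd : (r * u) ∣ Fintype.card (ZMod p)ˣ := by
      rw [hcardunits, hm0]
      exact ⟨2 * m0, by ring⟩
    have hquot : Fintype.card (ZMod p)ˣ / (r * u) = w := by
      rw [hcardunits, hm0, hwdef, show 2 * r * u * m0 = (r * u) * (2 * m0) by ring]
      exact Nat.mul_div_cancel_left _ hk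
    have key := sum_pow_eq_card_smul (G := (ZMod p)ˣ) (r * u) hk hdvd
      (fun k hk => card_filter_pow_le p k hk)
      (fun y => e2 (((((ωp : ZMod p) ^ j * tp) * ((y : (ZMod p)ˣ) : ZMod p)).val : ℝ) / (p : ℝ)))
    rw [hquot] at key
    rw [key, hfη j]
    push_cast
    ring
  have hgauss2 : ∀ j : ℕ, gaussG p (r * u / 2) ((ωp : ZMod p) ^ j * tp) =
      1 + ((r : ℂ) * u / 2) * (η j + η (j + u2)) := by
    intro j
    have hk2 : r * u / 2 = r * u2 := by
      rw [huu2, show r * (2 * u2) = 2 * (r * u2) by ring]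
      exact Nat.mul_div_cancel_left _ (by norm_num)
    have hk2pos : 0 < r * u2 := by positivity
    rw [hk2, gaussG_eval p (r * u2) hk2pos ((ωp : ZMod p) ^ j * tp)]
    have hdvd : (r * u2) ∣ Fintype.card (ZMod p)ˣ := by
      rw [hcardunits, hm0, huu2]
      exact ⟨4 * m0, by ring⟩
    have hquot : Fintype.card (ZMod p)ˣ / (r * u2) = 2 * w := by
      rw [hcardunits, hm0, hwdef, huu2, show 2 * r * (2 * u2) * m0 = (r * u2) * (2 * (2 * m0)) by ring]
      exact Nat.mul_div_cancel_left _ hk2pos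
    have key := sum_pow_eq_card_smul (G := (ZMod p)ˣ) (r * u2) hk2pos hdvd
      (fun k hk => card_filter_pow_le p k hk)
      (fun y => e2 (((((ωp : ZMod p) ^ j * tp) * ((y : (ZMod p)ˣ) : ZMod p)).val : ℝ) / (p : ℝ)))
    rw [hquot] at key
    rw [key]
    have h2w : 0 < 2 * w := by omega
    have hstep : ∑ y ∈ filt (2 * w),
        e2 (((((ωp : ZMod p) ^ j * tp) * ((y : (ZMod p)ˣ) : ZMod p)).val : ℝ) / (p : ℝ))
        = η j + η (j + u2) := by
      rw [Finset.sum_congr rfl (fun y _ => hfF j y)]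
      simp only [hfilt]
      rw [← sum_pow_eq_filter (ωp ^ u2) (2 * w) hordpu2 h2w (hcardfilt _ h2w)
        (fun x => F (ωp ^ j * x))]
      rw [sum_range_mul 2 w (fun i => F (ωp ^ j * (ωp ^ u2) ^ i))]
      rw [show (Finset.range 2) = {0, 1} by rfl]
      rw [Finset.sum_insert (by simp), Finset.sum_singleton]
      simp only [hη]
      congr 1
      · apply Finset.sum_congr rfl
        intro m _
        congr 1
        rw [← pow_mul, ← pow_add]
        congr 1
        rw [huu2]
        ring
      · apply Finset.sum_congr rfl
        intro m _
        congr 1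
        rw [← pow_mul, ← pow_add]
        congr 1
        rw [huu2]
        ring
    rw [hstep]
    have hcastu : (u : ℂ) = 2 * (u2 : ℂ) := by rw [huu2]; push_cast; ring
    rw [hcastu]
    push_cast
    ring
  -- conjugation of S
  have hSconj : ∀ j : ℕ, S (j + u2) = (starRingEnd ℂ) (S j) := by
    intro j
    obtain ⟨c, hc⟩ := hv
    have h1 : S (j + u2 * v) = S (j + u2) := by
      rw [show j + u2 * v = (j + u2) + u * c by rw [hc, huu2]; ring, hSperk]
    rw [← h1]
    simp only [hS]
    have hexp : u * v / 2 = u2 * v := by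
      rw [huu2, show 2 * u2 * v = 2 * (u2 * v) by ring]
      exact Nat.mul_div_cancel_left _ (by norm_num)
    have harg : (ωn : ZMod n) ^ (j + u2 * v) * sn = -((ωn : ZMod n) ^ j * sn) := by
      rw [pow_add]
      have : (ωn : ZMod n) ^ (u2 * v) = -1 := by rw [← hexp, hneg]
      rw [this]
      ring
    rw [harg, cs_neg]
  -- periodicity
  -- final assembly
  rw [hLHS]
  have hsplit : ∑ j ∈ Finset.range u, η j * S j =
      ∑ j ∈ Finset.Icc 1 u2, (η j * S j + η (j + u2) * S (j + u2)) := by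
    have hf0 : η 0 * S 0 = η u * S u := by
      have h1 := hηper 0
      have h2 := hSper 0
      rw [Nat.zero_add] at h1 h2
      rw [h1, h2]
    rw [← sum_Icc_one_eq_sum_range _ u hf0]
    have hsplit2 : ∑ j ∈ Finset.Icc 1 u, η j * S j =
        ∑ i ∈ Finset.range u2, (η (1 + i) * S (1 + i)) +
        ∑ i ∈ Finset.range u2, (η (u2 + 1 + i) * S (u2 + 1 + i)) := by
      rw [← Finset.Ico_add_one_right_eq_Icc,
        ← Finset.sum_Ico_consecutive (fun j => η j * S j)
          (show 1 ≤ u2 + 1 by omega) (show u2 + 1 ≤ u + 1 by omega),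
        Finset.sum_Ico_eq_sum_range, Finset.sum_Ico_eq_sum_range]
      rw [show u2 + 1 - 1 = u2 by omega, show u + 1 - (u2 + 1) = u2 by omega]
    rw [hsplit2]
    rw [Finset.sum_add_distrib]
    congr 1
    · rw [← Finset.Ico_add_one_right_eq_Icc, Finset.sum_Ico_eq_sum_range,
        show u2 + 1 - 1 = u2 by omega]
    · rw [← Finset.Ico_add_one_right_eq_Icc, Finset.sum_Ico_eq_sum_range]
      have : u2 + 1 - 1 = u2 := by omega
      rw [this]
      apply Finset.sum_congr rfl
      intro i _
      congr 2 <;> omega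
  rw [hsplit, Finset.mul_sum]
  apply Finset.sum_congr rfl
  intro j _
  rw [hSconj j]
  have hg1 := hgauss1 j
  have hg2 := hgauss2 j
  have hru : (r : ℂ) * u ≠ 0 := by
    have h1 : (r : ℂ) ≠ 0 := Nat.cast_ne_zero.mpr hr.ne'
    have h2 : (u : ℂ) ≠ 0 := Nat.cast_ne_zero.mpr hupos.ne'
    exact mul_ne_zero h1 h2
  rw [hg1, hg2]
  generalize hSr : (((S j).re : ℝ) : ℂ) = Sr
  generalize hSi : (((S j).im : ℝ) : ℂ) = Si
  have hCeq : (starRingEnd ℂ) (S j) = Sr - Si * Complex.I := by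
    rw [← hSr, ← hSi]; apply Complex.ext <;> simp
  have hSeq : S j = Sr + Si * Complex.I := by
    rw [← hSr, ← hSi]; exact (Complex.re_add_im _).symm
  rw [hCeq, hSeq]
  field_simp [Nat.cast_ne_zero.mpr hr.ne', Nat.cast_ne_zero.mpr hupos.ne']
  ring
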